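/- arXiv:1311.3287 — 3 statements merged into one kernel-verified Lean document; each statement's English description precedes it below -/
import Mathlib

section
/- Under the setting of the whitening lemma, the whitened third-order tensor T := C₃ ×₁ W* ×₂ W* ×₃ W*, where C₃ = Σ_h π_h μ_h^{⊗3}, equals Σ_{h=1}^k π_h^{-1/2} v_h^{⊗3} where v_h = π_h^{1/2} W* μ_h, and the vectors v_1,...,v_k ∈ ℝ^k are orthonormal. In particular T is a symmetric tensor with orthogonal decomposition whose eigenvalues are π_h^{-1/2}. -/
open scoped RealInnerProductSpace

/-- The whitened third-order tensor `T = C₃ ×₁ W* ×₂ W* ×₃ W*` (given by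
`T(a,b,c) = C₃(Wa, Wb, Wc)`) has the orthogonal decomposition
`T = ∑ h, π h ^ (-1/2) • v h ⊗ v h ⊗ v h` with `v h = √(π h) • W* μ h`
orthonormal. -/
theorem whitened_tensor_orthogonal_decomposition
    {F : Type*} [NormedAddCommGroup F] [InnerProductSpace ℝ F]
    {k : ℕ} (π : Fin k → ℝ) (μ : Fin k → F)
    (hπ : ∀ h, 0 < π h) (hind : LinearIndependent ℝ μ)
    (W : EuclideanSpace ℝ (Fin k) →ₗ[ℝ] F)
    -- `W* C₂ W = I`
    (hW : ∀ a b : EuclideanSpace ℝ (Fin k),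
      ∑ h, π h * (⟪μ h, W a⟫ * ⟪μ h, W b⟫) = ⟪a, b⟫)
    (v : Fin k → EuclideanSpace ℝ (Fin k))
    -- `v h = √(π h) • W* μ h`, coordinate-wise
    (hv : ∀ h i, v h i =
      Real.sqrt (π h) * ⟪μ h, W (EuclideanSpace.single i 1)⟫) :
    Orthonormal ℝ v ∧
      ∀ a b c : EuclideanSpace ℝ (Fin k),
        ∑ h, π h * (⟪μ h, W a⟫ * ⟪μ h, W b⟫ * ⟪μ h, W c⟫)
          = ∑ h, (Real.sqrt (π h))⁻¹ * (⟪v h, a⟫ * ⟪v h, b⟫ * ⟪v h, c⟫) := by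
  have hsq : ∀ h, Real.sqrt (π h) * Real.sqrt (π h) = π h :=
    fun h => Real.mul_self_sqrt (hπ h).le
  -- key: ⟪v h, a⟫ = √(π h) * ⟪μ h, W a⟫
  have key : ∀ h (a : EuclideanSpace ℝ (Fin k)),
      ⟪v h, a⟫ = Real.sqrt (π h) * ⟪μ h, W a⟫ := by
    intro h a
    have hdecomp : a = ∑ i, a i • EuclideanSpace.single i 1 := by
      ext j; rw [WithLp.ofLp_sum, Finset.sum_apply]; simp [EuclideanSpace.single_apply]
    conv_rhs => rw [hdecomp]
    rw [map_sum, inner_sum, PiLp.inner_apply, Finset.mul_sum]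
    simp only [map_smul, inner_smul_right, RCLike.inner_apply, starRingEnd_apply,
      star_trivial, hv]
    exact Finset.sum_congr rfl fun i _ => by ring
  constructor
  · -- orthonormality via the square-matrix trick
    have hMtM : (Matrix.of fun h i => v h i).transpose * (Matrix.of fun h i => v h i)
        = (1 : Matrix (Fin k) (Fin k) ℝ) := by
      ext i j
      have hWij := hW (EuclideanSpace.single i 1) (EuclideanSpace.single j 1)
      have hij : ⟪(EuclideanSpace.single i 1 : EuclideanSpace ℝ (Fin k)),
          EuclideanSpace.single j 1⟫ = if i = j then (1:ℝ) else 0 := by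
        rw [PiLp.inner_apply]
        simp [EuclideanSpace.single_apply, Finset.sum_ite_eq', eq_comm]
      rw [hij] at hWij
      simp only [Matrix.mul_apply, Matrix.transpose_apply, Matrix.one_apply, Matrix.of_apply]
      rw [← hWij]
      refine Finset.sum_congr rfl fun h _ => ?_
      rw [hv, hv]
      conv_rhs => rw [← hsq h]
      ring
    have hMMt := mul_eq_one_comm.mp hMtM
    rw [orthonormal_iff_ite]
    intro g h
    have := congrFun (congrFun hMMt g) h
    simp only [Matrix.mul_apply, Matrix.transpose_apply, Matrix.one_apply, Matrix.of_apply] at this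
    rw [PiLp.inner_apply]
    simpa [mul_comm] using this
  · intro a b c
    refine Finset.sum_congr rfl fun h _ => ?_
    have h0 : Real.sqrt (π h) ≠ 0 :=
      ne_of_gt (Real.sqrt_pos.mpr (hπ h))
    rw [key, key, key]
    conv_lhs => rw [← hsq h]
    field_simp
end

section
/- (Whitening perturbation bound.) Let C = M Diag(π) M* be a rank-k positive semidefinite operator on a Hilbert space F (π_h > 0, M with linearly independent columns), let Ĉ be a perturbation with ε := ‖C − Ĉ‖ satisfying ε < 0.5 σ_k(C), where σ_k(C) is the k-th largest singular value. Let Ŵ = Û_k Ŝ_k^{-1/2} be the whitening map built from the top-k eigendecomposition of B := 0.5(Ĉ + Ĉ*), and let W := Ŵ A D^{-1/2} A*, where Ŵ* C Ŵ = A D A* is an eigendecomposition. Then ‖Diag(π)^{1/2} M* (Ŵ − W)‖ ≤ 4ε / σ_k(C). -/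
open scoped RealInnerProductSpace

/-- Whitening perturbation bound.  For `C = M Diag(π) M*` of rank `k` and a
perturbation `Ĉ` with `ε = ‖C − Ĉ‖ < 0.5 σ_k(C)`, let `Ŵ = Û_k Ŝ_k^{-1/2}` be
the whitening map built from the top-`k` eigendecomposition of
`B = 0.5(Ĉ + Ĉ*)`, and let `W = Ŵ A D^{-1/2} A*` where `Ŵ* C Ŵ = A D A*`.
Then `‖Diag(π)^{1/2} M* (Ŵ − W)‖ ≤ 4 ε / σ_k(C)` (as an operator bound). -/
theorem whitening_perturbation_bound
    {F : Type*} [NormedAddCommGroup F] [InnerProductSpace ℝ F] [CompleteSpace F]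
    {k : ℕ} (π : Fin k → ℝ) (μ : Fin k → F)
    (hπ : ∀ h, 0 < π h) (hind : LinearIndependent ℝ μ)
    (C Chat B : F →L[ℝ] F)
    -- `C = M Diag(π) M* = ∑ h, π h • μ h ⊗ μ h`
    (hC : ∀ x : F, C x = ∑ h, (π h * ⟪μ h, x⟫) • μ h)
    (σk ε : ℝ)
    -- Courant–Fischer characterization of `σ_k(C)`
    (hσk : IsGreatest {t : ℝ | ∃ V : Submodule ℝ F,
      Module.finrank ℝ V = k ∧ ∀ x ∈ V, t * ‖x‖ ^ 2 ≤ ⟪x, C x⟫} σk)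
    (hε : ‖C - Chat‖ = ε) (hεsmall : ε < 0.5 * σk)
    -- `B = 0.5 (Ĉ + Ĉ*)`
    (hB : ∀ x y : F, ⟪B x, y⟫ = (1 / 2) * (⟪Chat x, y⟫ + ⟪x, Chat y⟫))
    -- top-`k` eigenpairs of `B`
    (u : Fin k → F) (s : Fin k → ℝ) (hu : Orthonormal ℝ u)
    (hBu : ∀ i, B (u i) = s i • u i)
    (htop : ∀ i : Fin k, IsGreatest {t : ℝ | ∃ V : Submodule ℝ F,
      Module.finrank ℝ V = (i : ℕ) + 1 ∧ ∀ x ∈ V, t * ‖x‖ ^ 2 ≤ ⟪x, B x⟫} (s i))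
    -- `Ŵ = Û_k Ŝ_k^{-1/2}`
    (What W : EuclideanSpace ℝ (Fin k) →ₗ[ℝ] F)
    (hWhat : ∀ a : EuclideanSpace ℝ (Fin k),
      What a = ∑ i, ((Real.sqrt (s i))⁻¹ * a i) • u i)
    -- eigendecomposition `Ŵ* C Ŵ = A D A*` with `A` orthogonal, `D` positive
    (A : Matrix (Fin k) (Fin k) ℝ) (D : Fin k → ℝ)
    (hA : A * A.transpose = 1) (hA' : A.transpose * A = 1) (hD : ∀ l, 0 < D l)
    (hADA : ∀ i j, ⟪What (EuclideanSpace.single i 1),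
        C (What (EuclideanSpace.single j 1))⟫ = ∑ l, A i l * D l * A j l)
    -- `W = Ŵ A D^{-1/2} A*`
    (hW : ∀ a : EuclideanSpace ℝ (Fin k),
      W a = What ((WithLp.equiv 2 (Fin k → ℝ)).symm
        (fun i => ∑ l, A i l * ((Real.sqrt (D l))⁻¹ * ∑ j, A j l * a j)))) :
    ∀ a : EuclideanSpace ℝ (Fin k),
      Real.sqrt (∑ h, (Real.sqrt (π h) * ⟪μ h, What a - W a⟫) ^ 2)
        ≤ (4 * ε / σk) * ‖a‖ := by
  have hε0 : 0 ≤ ε := hε ▸ norm_nonneg _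
  have hσ0 : 0 < σk := by linarith
  -- entries of the orthogonality relations
  have hAA : ∀ m l, (∑ i, A i m * A i l) = if m = l then (1:ℝ) else 0 := by
    intro m l
    have := congrFun (congrFun hA' m) l
    simpa [Matrix.mul_apply, Matrix.transpose_apply, Matrix.one_apply] using this
  have hAA2 : ∀ j j', (∑ m, A j m * A j' m) = if j = j' then (1:ℝ) else 0 := by
    intro j j'
    have := congrFun (congrFun hA j) j'
    simpa [Matrix.mul_apply, Matrix.transpose_apply, Matrix.one_apply] using this
  -- quadratic-form distance between C and B
  have hCB : ∀ y : F, |⟪y, C y⟫ - ⟪y, B y⟫| ≤ ε * ‖y‖ ^ 2 := by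
    intro y
    have h1 : ⟪y, B y⟫ = ⟪y, Chat y⟫ := by
      have h := hB y y
      have hc1 : ⟪y, B y⟫ = ⟪B y, y⟫ := real_inner_comm _ _
      have hc2 : ⟪Chat y, y⟫ = ⟪y, Chat y⟫ := real_inner_comm _ _
      rw [hc1, h, hc2]
      ring
    have h2 : ⟪y, C y⟫ - ⟪y, B y⟫ = ⟪y, (C - Chat) y⟫ := by
      rw [h1, ContinuousLinearMap.sub_apply, inner_sub_right]
    rw [h2]
    calc |⟪y, (C - Chat) y⟫| ≤ ‖y‖ * ‖(C - Chat) y‖ := abs_real_inner_le_norm _ _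
      _ ≤ ‖y‖ * (‖C - Chat‖ * ‖y‖) := by
          gcongr
          exact (C - Chat).le_opNorm y
      _ = ε * ‖y‖ ^ 2 := by rw [hε]; ring
  -- eigenvalue lower bound (Weyl)
  have hs : ∀ i, σk - ε ≤ s i := by
    intro i
    obtain ⟨⟨V, hVk, hVC⟩, -⟩ := hσk
    obtain ⟨f, hf⟩ := exists_linearIndependent_of_le_finrank
      (R := ℝ) (M := V) (n := (i : ℕ) + 1) (by rw [hVk]; exact i.isLt)
    refine (htop i).2 ?_
    have hli : LinearIndependent ℝ (fun j => ((f j : V) : F)) := hf.map' V.subtype V.ker_subtype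
    refine ⟨Submodule.span ℝ (Set.range fun j => ((f j : V) : F)), ?_, ?_⟩
    · rw [finrank_span_eq_card hli, Fintype.card_fin]
    · intro x hx
      have hxV : x ∈ V := by
        refine Submodule.span_le.mpr ?_ hx
        rintro - ⟨j, rfl⟩
        exact (f j).2
      have h1 := hVC x hxV
      have h2 := abs_le.mp (hCB x)
      linarith [h2.1]
  have hs2 : ∀ i, 0.5 * σk ≤ s i := fun i => by linarith [hs i]
  have hspos : ∀ i, 0 < s i := fun i => by linarith [hs2 i]
  have hsq : ∀ i, Real.sqrt (s i) * Real.sqrt (s i) = s i :=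
    fun i => Real.mul_self_sqrt (hspos i).le
  have hsqpos : ∀ i, 0 < Real.sqrt (s i) := fun i => Real.sqrt_pos.mpr (hspos i)
  -- coordinate representation
  have hrep : ∀ v : EuclideanSpace ℝ (Fin k),
      (∑ i, v i • EuclideanSpace.single i (1 : ℝ)) = v := by
    intro v
    ext j
    rw [WithLp.ofLp_sum, Finset.sum_apply]
    simp [EuclideanSpace.single_apply]
  -- the quadratic form of C through What
  have key : ∀ v w : EuclideanSpace ℝ (Fin k),
      ⟪What v, C (What w)⟫ = ∑ i, ∑ j, v i * w j * (∑ l, A i l * D l * A j l) := by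
    intro v w
    conv_lhs => rw [← hrep v, ← hrep w]
    rw [map_sum, map_sum, map_sum, sum_inner]
    simp only [map_smul, inner_sum, real_inner_smul_left, real_inner_smul_right, hADA]
    refine Finset.sum_congr rfl fun i _ => Finset.sum_congr rfl fun j _ => by ring
  have swap3 : ∀ g : Fin k → Fin k → Fin k → ℝ,
      (∑ i, ∑ j, ∑ l, g i j l) = ∑ l, ∑ i, ∑ j, g i j l := by
    intro g
    calc (∑ i, ∑ j, ∑ l, g i j l) = ∑ i, ∑ l, ∑ j, g i j l :=
          Finset.sum_congr rfl fun i _ => Finset.sum_comm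
      _ = ∑ l, ∑ i, ∑ j, g i j l := Finset.sum_comm
  have key2 : ∀ v w : EuclideanSpace ℝ (Fin k),
      ⟪What v, C (What w)⟫
        = ∑ l, D l * ((∑ i, A i l * v i) * (∑ j, A j l * w j)) := by
    intro v w
    rw [key v w]
    simp only [Finset.mul_sum, Finset.sum_mul]
    rw [swap3]
    refine Finset.sum_congr rfl fun l _ => ?_
    rw [Finset.sum_comm]
    refine Finset.sum_congr rfl fun i _ => Finset.sum_congr rfl fun j _ => by ring
  -- quadratic form of B through What
  have hBform : ∀ v : EuclideanSpace ℝ (Fin k),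
      ⟪What v, B (What v)⟫ = ∑ i, (v i) ^ 2 := by
    intro v
    rw [hWhat v, map_sum]
    simp only [map_smul, hBu, smul_smul]
    rw [hu.inner_sum]
    refine Finset.sum_congr rfl fun i _ => ?_
    have h0 := (hsqpos i).ne'
    rw [← hsq i]
    field_simp
    rw [Real.sqrt_sq (Real.sqrt_nonneg _)]
    simp only [starRingEnd_apply, star_trivial]
    field_simp
  -- norm of What v
  have hWnorm : ∀ v : EuclideanSpace ℝ (Fin k),
      ‖What v‖ ^ 2 = ∑ i, ((Real.sqrt (s i))⁻¹ * v i) ^ 2 := by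
    intro v
    rw [← real_inner_self_eq_norm_sq, hWhat v, hu.inner_sum]
    simp [sq]
  -- bound on D l
  have hDbound : ∀ l, |D l - 1| ≤ ε * (2 / σk) := by
    intro l
    set v : EuclideanSpace ℝ (Fin k) :=
      (WithLp.equiv 2 (Fin k → ℝ)).symm (fun i => A i l) with hv
    have hvi : ∀ i, v i = A i l := fun i => rfl
    have hCv : ⟪What v, C (What v)⟫ = D l := by
      rw [key2 v v]
      have hcol : ∀ m, (∑ i, A i m * v i) = if m = l then (1:ℝ) else 0 := by
        intro m
        simp only [hvi]
        exact hAA m l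
      simp only [hcol]
      simp [Finset.sum_ite_eq', mul_ite]
    have hBv : ⟪What v, B (What v)⟫ = 1 := by
      rw [hBform]
      have : (∑ i, (v i) ^ 2) = ∑ i, A i l * A i l := by
        refine Finset.sum_congr rfl fun i _ => by rw [hvi, sq]
      rw [this, hAA l l]
      simp
    have hnv : ‖What v‖ ^ 2 ≤ 2 / σk := by
      rw [hWnorm]
      have hterm : ∀ i, ((Real.sqrt (s i))⁻¹ * v i) ^ 2 ≤ (2 / σk) * (A i l * A i l) := by
        intro i
        rw [hvi, mul_pow, inv_pow, sq, hsq i]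
        have h1 : (s i)⁻¹ ≤ 2 / σk := by
          have h2 : (0.5 * σk)⁻¹ = 2 / σk := by
            rw [div_eq_mul_inv, mul_inv]
            norm_num
          rw [← h2]
          exact inv_anti₀ (by linarith) (hs2 i)
        have h3 : (0:ℝ) ≤ A i l * A i l := mul_self_nonneg _
        calc (s i)⁻¹ * A i l ^ 2 ≤ (2 / σk) * A i l ^ 2 := by
              apply mul_le_mul_of_nonneg_right h1 (sq_nonneg _)
          _ = (2 / σk) * (A i l * A i l) := by ring
      calc (∑ i, ((Real.sqrt (s i))⁻¹ * v i) ^ 2)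
          ≤ ∑ i, (2 / σk) * (A i l * A i l) := Finset.sum_le_sum fun i _ => hterm i
        _ = (2 / σk) * ∑ i, A i l * A i l := by rw [Finset.mul_sum]
        _ = 2 / σk := by rw [hAA l l]; simp
    have habs := hCB (What v)
    rw [hCv, hBv] at habs
    calc |D l - 1| ≤ ε * ‖What v‖ ^ 2 := habs
      _ ≤ ε * (2 / σk) := mul_le_mul_of_nonneg_left hnv hε0
  -- bound on sqrt (D l)
  have hsqrtD : ∀ l, (Real.sqrt (D l) - 1) ^ 2 ≤ (2 * ε / σk) ^ 2 := by
    intro l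
    have h1 : Real.sqrt (D l) * Real.sqrt (D l) = D l := Real.mul_self_sqrt (hD l).le
    have h2 : 0 ≤ Real.sqrt (D l) := Real.sqrt_nonneg _
    have h3 := abs_le.mp (hDbound l)
    have hb : (0:ℝ) ≤ ε * (2 / σk) := by positivity
    have h4 : (D l - 1) ^ 2 ≤ (ε * (2 / σk)) ^ 2 := by nlinarith [h3.1, h3.2]
    have h5 : (2 * ε / σk) ^ 2 = (ε * (2 / σk)) ^ 2 := by ring
    rw [h5]
    nlinarith [sq_nonneg (Real.sqrt (D l) - 1), sq_nonneg (Real.sqrt (D l) + 1),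
      sq_nonneg ((Real.sqrt (D l) - 1) * (Real.sqrt (D l) + 1))]
  -- main computation
  intro a
  set c : EuclideanSpace ℝ (Fin k) := (WithLp.equiv 2 (Fin k → ℝ)).symm
    (fun i => ∑ l, A i l * ((Real.sqrt (D l))⁻¹ * ∑ j, A j l * a j)) with hc
  have hci : ∀ i, c i = ∑ l, A i l * ((Real.sqrt (D l))⁻¹ * ∑ j, A j l * a j) :=
    fun i => rfl
  have hWc : W a = What c := by rw [hW a, hc]
  have hWa : What a - W a = What (a - c) := by rw [map_sub, hWc]
  -- the sum of squares equals a quadratic form of C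
  have hsum : ⟪What (a - c), C (What (a - c))⟫
      = ∑ h', (Real.sqrt (π h') * ⟪μ h', What (a - c)⟫) ^ 2 := by
    rw [hC (What (a - c)), inner_sum]
    refine Finset.sum_congr rfl fun h' _ => ?_
    rw [real_inner_smul_right, mul_pow, Real.sq_sqrt (hπ h').le,
      real_inner_comm (What (a - c)) (μ h')]
    ring
  -- coordinates of A^T (a - c)
  have hac : ∀ m, (∑ i, A i m * (a - c) i)
      = (1 - (Real.sqrt (D m))⁻¹) * (∑ j, A j m * a j) := by
    intro m
    have hsub : ∀ i, (a - c) i = a i - c i := fun i => rfl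
    have hcm : (∑ i, A i m * c i) = (Real.sqrt (D m))⁻¹ * (∑ j, A j m * a j) := by
      have e1 : (∑ i, A i m * c i)
          = ∑ i, ∑ l, A i m * (A i l * ((Real.sqrt (D l))⁻¹ * ∑ j, A j l * a j)) := by
        refine Finset.sum_congr rfl fun i _ => ?_
        rw [hci i, Finset.mul_sum]
      rw [e1, Finset.sum_comm]
      have hterm : ∀ l, (∑ i, A i m * (A i l * ((Real.sqrt (D l))⁻¹ * ∑ j, A j l * a j)))
          = (if m = l then (1:ℝ) else 0) * ((Real.sqrt (D l))⁻¹ * ∑ j, A j l * a j) := by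
        intro l
        rw [← hAA m l, Finset.sum_mul]
        refine Finset.sum_congr rfl fun i _ => by ring
      simp only [hterm, ite_mul, one_mul, zero_mul]
      rw [Finset.sum_ite_eq]
      simp
    calc (∑ i, A i m * (a - c) i) = (∑ i, A i m * a i) - ∑ i, A i m * c i := by
          simp only [hsub, mul_sub, Finset.sum_sub_distrib]
      _ = (1 - (Real.sqrt (D m))⁻¹) * (∑ j, A j m * a j) := by rw [hcm]; ring
  -- value of the quadratic form
  have hCx : ⟪What (a - c), C (What (a - c))⟫
      = ∑ m, (Real.sqrt (D m) - 1) ^ 2 * (∑ j, A j m * a j) ^ 2 := by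
    rw [key2]
    refine Finset.sum_congr rfl fun m _ => ?_
    rw [hac m]
    have h1 : Real.sqrt (D m) * Real.sqrt (D m) = D m := Real.mul_self_sqrt (hD m).le
    have h2 : Real.sqrt (D m) ≠ 0 := (Real.sqrt_pos.mpr (hD m)).ne'
    rw [← h1]
    field_simp
    rw [Real.sqrt_sq (Real.sqrt_nonneg _)]
  -- A preserves the sum of squares
  have hAnorm : (∑ m, (∑ j, A j m * a j) ^ 2) = ∑ j, (a j) ^ 2 := by
    calc (∑ m, (∑ j, A j m * a j) ^ 2)
        = ∑ m, ∑ j, ∑ j', (A j m * a j) * (A j' m * a j') := by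
          refine Finset.sum_congr rfl fun m _ => ?_
          rw [sq, Finset.sum_mul_sum]
      _ = ∑ j, ∑ j', (a j * a j') * ∑ m, A j m * A j' m := by
          rw [Finset.sum_comm]
          refine Finset.sum_congr rfl fun j _ => ?_
          rw [Finset.sum_comm]
          refine Finset.sum_congr rfl fun j' _ => ?_
          rw [Finset.mul_sum]
          refine Finset.sum_congr rfl fun m _ => by ring
      _ = ∑ j, (a j) ^ 2 := by
          simp only [hAA2, mul_ite, mul_one, mul_zero]
          refine Finset.sum_congr rfl fun j _ => ?_
          rw [Finset.sum_ite_eq]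
          simp [sq]
  have hna : ‖a‖ ^ 2 = ∑ j, (a j) ^ 2 := by
    rw [EuclideanSpace.norm_eq, Real.sq_sqrt (by positivity)]
    simp [sq_abs]
  -- finish
  have hle : (∑ m, (Real.sqrt (D m) - 1) ^ 2 * (∑ j, A j m * a j) ^ 2)
      ≤ (2 * ε / σk) ^ 2 * ‖a‖ ^ 2 := by
    calc (∑ m, (Real.sqrt (D m) - 1) ^ 2 * (∑ j, A j m * a j) ^ 2)
        ≤ ∑ m, (2 * ε / σk) ^ 2 * (∑ j, A j m * a j) ^ 2 :=
          Finset.sum_le_sum fun m _ =>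
            mul_le_mul_of_nonneg_right (hsqrtD m) (sq_nonneg _)
      _ = (2 * ε / σk) ^ 2 * ∑ m, (∑ j, A j m * a j) ^ 2 := by rw [Finset.mul_sum]
      _ = (2 * ε / σk) ^ 2 * ‖a‖ ^ 2 := by rw [hAnorm, hna]
  have hval : (∑ h', (Real.sqrt (π h') * ⟪μ h', What a - W a⟫) ^ 2)
      = ∑ m, (Real.sqrt (D m) - 1) ^ 2 * (∑ j, A j m * a j) ^ 2 := by
    rw [hWa]
    rw [← hsum, hCx]
  rw [hval]
  calc Real.sqrt (∑ m, (Real.sqrt (D m) - 1) ^ 2 * (∑ j, A j m * a j) ^ 2)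
      ≤ Real.sqrt ((2 * ε / σk) ^ 2 * ‖a‖ ^ 2) := Real.sqrt_le_sqrt hle
    _ = (2 * ε / σk) * ‖a‖ := by
        rw [← mul_pow, Real.sqrt_sq (by positivity)]
    _ ≤ (4 * ε / σk) * ‖a‖ := by
        apply mul_le_mul_of_nonneg_right _ (norm_nonneg a)
        exact (div_le_div_iff_of_pos_right hσ0).mpr (by linarith)
end

section
/- (Factorization of the triple embedding.) If X₁, X₂, X₃ are conditionally independent given H ∈ [k] with P(H=h)=π_h and shared conditional embedding μ_{X|h}, then E[φ(X₁)⊗φ(X₂)⊗φ(X₃)] = Σ_{h=1}^k π_h · μ_{X|h} ⊗ μ_{X|h} ⊗ μ_{X|h}. -/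
open MeasureTheory ProbabilityTheory
open scoped RealInnerProductSpace ProbabilityTheory

lemma aux_integrable_cond {Θ β : Type*} [MeasurableSpace Θ] [NormedAddCommGroup β]
    {P : Measure Θ} {s : Set Θ} (hs : P s ≠ 0) {f : Θ → β}
    (hf : Integrable f P) : Integrable f (P[|s]) := by
  unfold ProbabilityTheory.cond
  exact (hf.restrict).smul_measure (ENNReal.inv_ne_top.mpr hs)

lemma aux_triple_prod_integral {Θ F : Type*} [MeasurableSpace Θ]
    [NormedAddCommGroup F] [InnerProductSpace ℝ F] [CompleteSpace F]
    [MeasurableSpace F] [BorelSpace F]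
    (ν : Measure Θ) [IsProbabilityMeasure ν]
    (Y : Fin 3 → Θ → F) (hYm : ∀ i, Measurable (Y i))
    (hYindep : iIndepFun Y ν)
    (hYint : ∀ i, Integrable (Y i) ν)
    (c : Fin 3 → F) :
    (∫ θ, ⟪Y 0 θ, c 0⟫ * (⟪Y 1 θ, c 1⟫ * ⟪Y 2 θ, c 2⟫) ∂ν)
      = ⟪∫ θ, Y 0 θ ∂ν, c 0⟫ * (⟪∫ θ, Y 1 θ ∂ν, c 1⟫ * ⟪∫ θ, Y 2 θ ∂ν, c 2⟫) := by
  classical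
  set g : Fin 3 → Θ → ℝ := fun i θ => ⟪Y i θ, c i⟫ with hg
  have hLm : ∀ i : Fin 3, Measurable (fun x : F => ⟪x, c i⟫) := fun i =>
    (continuous_id.inner continuous_const).measurable
  have hgm : ∀ i, Measurable (g i) := fun i => (hLm i).comp (hYm i)
  have hgindep : iIndepFun g ν :=
    hYindep.comp (fun i x => ⟪x, c i⟫) hLm
  have hgint : ∀ i, Integrable (g i) ν := by
    intro i
    refine ((hYint i).norm.mul_const ‖c i‖).mono' (hgm i).aestronglyMeasurable ?_
    filter_upwards with θ
    simpa using abs_real_inner_le_norm (Y i θ) (c i)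
  have hgval : ∀ i, (∫ θ, g i θ ∂ν) = ⟪∫ θ, Y i θ ∂ν, c i⟫ := by
    intro i
    rw [real_inner_comm, ← integral_inner (hYint i) (c i)]
    simp_rw [hg, real_inner_comm]
  have h12 : IndepFun (g 1) (g 2) ν := hgindep.indepFun (by decide)
  have h0p : IndepFun (g 0) (fun θ => (g 1 θ, g 2 θ)) ν :=
    (hgindep.indepFun_prodMk hgm 1 2 0 (by decide) (by decide)).symm
  have h0 : IndepFun (g 0) (g 1 * g 2) ν := by
    have := h0p.comp measurable_id (measurable_fst.mul measurable_snd)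
    exact this
  have h12int : Integrable (g 1 * g 2) ν := h12.integrable_mul (hgint 1) (hgint 2)
  have key : (∫ θ, g 0 θ * (g 1 θ * g 2 θ) ∂ν)
      = (∫ θ, g 0 θ ∂ν) * ((∫ θ, g 1 θ ∂ν) * (∫ θ, g 2 θ ∂ν)) := by
    have h1 : (∫ θ, (g 0 * (g 1 * g 2)) θ ∂ν)
        = (∫ θ, g 0 θ ∂ν) * (∫ θ, (g 1 * g 2) θ ∂ν) :=
      h0.integral_mul_eq_mul_integral (hgint 0).aestronglyMeasurable h12int.aestronglyMeasurable
    have h2 : (∫ θ, (g 1 * g 2) θ ∂ν) = (∫ θ, g 1 θ ∂ν) * (∫ θ, g 2 θ ∂ν) :=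
      h12.integral_mul_eq_mul_integral (hgint 1).aestronglyMeasurable (hgint 2).aestronglyMeasurable
    simp only [Pi.mul_apply] at h1 h2
    rw [h1, h2]
  rw [← hgval 0, ← hgval 1, ← hgval 2, ← key]

lemma aux_indep_integral {Θ Ω F G : Type*} [MeasurableSpace Θ] [MeasurableSpace Ω]
    [NormedAddCommGroup F] [InnerProductSpace ℝ F] [CompleteSpace F]
    [MeasurableSpace F] [BorelSpace F]
    [NormedAddCommGroup G] [InnerProductSpace ℝ G] [CompleteSpace G]
    (ν : Measure Θ) [IsProbabilityMeasure ν]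
    (X : Fin 3 → Θ → Ω) (φ : Ω → F)
    (hX : ∀ i, Measurable (X i)) (hφ : Measurable φ)
    (tp3 : F →L[ℝ] F →L[ℝ] F →L[ℝ] G)
    (htp3 : ∀ a b c a' b' c' : F,
      ⟪tp3 a b c, tp3 a' b' c'⟫ = ⟪a, a'⟫ * (⟪b, b'⟫ * ⟪c, c'⟫))
    (hindep : iIndepFun X ν)
    (hinti : ∀ i, Integrable (fun θ => φ (X i θ)) ν)
    (hint : Integrable (fun θ => tp3 (φ (X 0 θ)) (φ (X 1 θ)) (φ (X 2 θ))) ν) :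
    (∫ θ, tp3 (φ (X 0 θ)) (φ (X 1 θ)) (φ (X 2 θ)) ∂ν)
      = tp3 (∫ θ, φ (X 0 θ) ∂ν) (∫ θ, φ (X 1 θ) ∂ν) (∫ θ, φ (X 2 θ) ∂ν) := by
  classical
  set Y : Fin 3 → Θ → F := fun i θ => φ (X i θ) with hY
  have hYm : ∀ i, Measurable (Y i) := fun i => hφ.comp (hX i)
  have hYindep : iIndepFun Y ν :=
    hindep.comp (fun _ => φ) (fun _ => hφ)
  set m : Fin 3 → F := fun i => ∫ θ, Y i θ ∂ν with hm
  set V : G := ∫ θ, tp3 (Y 0 θ) (Y 1 θ) (Y 2 θ) ∂ν with hV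
  set W : G := tp3 (m 0) (m 1) (m 2) with hW
  set P : ℝ := ⟪m 0, m 0⟫ * (⟪m 1, m 1⟫ * ⟪m 2, m 2⟫) with hP
  have triple := fun c => aux_triple_prod_integral ν Y hYm hYindep hinti c
  have hWV : ⟪W, V⟫ = P := by
    rw [hV, ← integral_inner hint W]
    have : ∀ θ, ⟪W, tp3 (Y 0 θ) (Y 1 θ) (Y 2 θ)⟫
        = ⟪Y 0 θ, m 0⟫ * (⟪Y 1 θ, m 1⟫ * ⟪Y 2 θ, m 2⟫) := by
      intro θ
      rw [hW, htp3, real_inner_comm (m 0), real_inner_comm (m 1), real_inner_comm (m 2)]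
    show ∫ θ, ⟪W, tp3 (Y 0 θ) (Y 1 θ) (Y 2 θ)⟫ ∂ν = _
    simp_rw [this]
    rw [triple m, hP]
  have hVV : ⟪V, V⟫ = P := by
    conv_lhs => rw [hV]
    rw [← integral_inner hint V]
    have step : ∀ θ, ⟪V, tp3 (Y 0 θ) (Y 1 θ) (Y 2 θ)⟫
        = ⟪Y 0 θ, m 0⟫ * (⟪Y 1 θ, m 1⟫ * ⟪Y 2 θ, m 2⟫) := by
      intro θ
      rw [real_inner_comm, hV, ← integral_inner hint (tp3 (Y 0 θ) (Y 1 θ) (Y 2 θ))]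
      have : ∀ θ', ⟪tp3 (Y 0 θ) (Y 1 θ) (Y 2 θ), tp3 (Y 0 θ') (Y 1 θ') (Y 2 θ')⟫
          = ⟪Y 0 θ', Y 0 θ⟫ * (⟪Y 1 θ', Y 1 θ⟫ * ⟪Y 2 θ', Y 2 θ⟫) := by
        intro θ'
        rw [htp3, real_inner_comm (Y 0 θ), real_inner_comm (Y 1 θ), real_inner_comm (Y 2 θ)]
      show ∫ θ', ⟪tp3 (Y 0 θ) (Y 1 θ) (Y 2 θ), tp3 (Y 0 θ') (Y 1 θ') (Y 2 θ')⟫ ∂ν = _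
      simp_rw [this]
      rw [triple (fun i => Y i θ)]
      rw [real_inner_comm (m 0), real_inner_comm (m 1), real_inner_comm (m 2)]
    show ∫ θ, ⟪V, tp3 (Y 0 θ) (Y 1 θ) (Y 2 θ)⟫ ∂ν = _
    simp_rw [step]
    rw [triple m, hP]
  have hWW : ⟪W, W⟫ = P := by rw [hW, htp3, hP]
  have hzero : ⟪V - W, V - W⟫ = 0 := by
    have hVW' : ⟪V, W⟫ = P := by rw [real_inner_comm]; exact hWV
    rw [inner_sub_sub_self, hVV, hWW, hWV, hVW']
    ring
  have : V - W = 0 := by rwa [inner_self_eq_zero] at hzero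
  have hVW : V = W := by rwa [sub_eq_zero] at this
  exact hVW

/-- Factorization of the triple embedding: if `X₁, X₂, X₃` are conditionally
independent given a discrete latent variable `H ∈ [k]` with `P(H = h) = π h`
and shared conditional mean embedding `μ h`, then
`E[φ(X₁) ⊗ φ(X₂) ⊗ φ(X₃)] = ∑ h, π h • μ h ⊗ μ h ⊗ μ h`.  The tensor product
`F ⊗ F ⊗ F` is modelled by a Hilbert space `G` with a trilinear map `tp3`. -/
theorem triple_embedding_factorization
    {Ω F G Θ : Type*} [MeasurableSpace Ω]
    [NormedAddCommGroup F] [InnerProductSpace ℝ F] [CompleteSpace F]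
    [MeasurableSpace F] [BorelSpace F]
    [NormedAddCommGroup G] [InnerProductSpace ℝ G] [CompleteSpace G]
    [MeasureSpace Θ] [IsProbabilityMeasure (ℙ : Measure Θ)]
    {k : ℕ} (H : Θ → Fin k) (X : Fin 3 → Θ → Ω) (φ : Ω → F)
    (hH : Measurable H) (hX : ∀ i, Measurable (X i))
    (hφ : Measurable φ)
    (tp3 : F →L[ℝ] F →L[ℝ] F →L[ℝ] G)
    (htp3 : ∀ a b c a' b' c' : F,
      ⟪tp3 a b c, tp3 a' b' c'⟫ = ⟪a, a'⟫ * (⟪b, b'⟫ * ⟪c, c'⟫))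
    (π : Fin k → ℝ) (μ : Fin k → F)
    (hπ : ∀ h, (ℙ {θ | H θ = h}).toReal = π h) (hπpos : ∀ h, 0 < π h)
    -- conditional independence of the three views given `H = h`
    (hindep : ∀ h, iIndepFun X (ℙ[|{θ | H θ = h}]))
    -- `μ h` is the conditional mean embedding of each view
    (hμ : ∀ h i, (∫ θ, φ (X i θ) ∂(ℙ[|{θ | H θ = h}])) = μ h)
    -- integrability
    (hinti : ∀ i, Integrable (fun θ => φ (X i θ)) ℙ)
    (hint : Integrable (fun θ => tp3 (φ (X 0 θ)) (φ (X 1 θ)) (φ (X 2 θ))) ℙ) :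
    (∫ θ, tp3 (φ (X 0 θ)) (φ (X 1 θ)) (φ (X 2 θ)) ∂ℙ)
      = ∑ h, π h • tp3 (μ h) (μ h) (μ h) := by
  classical
  set s : Fin k → Set Θ := fun h => {θ | H θ = h} with hs
  have hsm : ∀ h, MeasurableSet (s h) := fun h => hH (measurableSet_singleton h)
  have hsne : ∀ h, (ℙ : Measure Θ) (s h) ≠ 0 := by
    intro h hz
    have h1 := hπ h
    rw [show {θ | H θ = h} = s h from rfl, hz] at h1
    simp at h1
    exact absurd h1.symm (ne_of_gt (hπpos h))
  have hsfin : ∀ h, (ℙ : Measure Θ) (s h) ≠ ⊤ := fun h => measure_ne_top _ _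
  have hprob : ∀ h, IsProbabilityMeasure (ℙ[|s h]) := fun h =>
    cond_isProbabilityMeasure (hsne h)
  -- conditional integral equals tp3 (μ h) (μ h) (μ h)
  have key : ∀ h, (∫ θ, tp3 (φ (X 0 θ)) (φ (X 1 θ)) (φ (X 2 θ)) ∂(ℙ[|s h]))
      = tp3 (μ h) (μ h) (μ h) := by
    intro h
    have := hprob h
    have h1 := aux_indep_integral (ℙ[|s h]) X φ hX hφ tp3 htp3 (hindep h)
      (fun i => aux_integrable_cond (hsne h) (hinti i)) (aux_integrable_cond (hsne h) hint)
    rw [h1, hμ h 0, hμ h 1, hμ h 2]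
  -- decomposition of ℙ
  have hdecomp : (ℙ : Measure Θ) = ∑ h, (ℙ : Measure Θ).restrict (s h) := by
    ext t ht
    rw [Measure.finset_sum_apply]
    simp_rw [Measure.restrict_apply ht]
    have hcover : t = ⋃ h, t ∩ s h := by
      ext θ; simp [hs]
    have hdisj : Pairwise (Function.onFun Disjoint fun h => t ∩ s h) := by
      intro i j hij
      simp only [Function.onFun, Set.disjoint_left]
      rintro θ ⟨-, hi⟩ ⟨-, hj⟩
      exact hij (hi.symm.trans hj)
    conv_lhs => rw [hcover]
    rw [measure_iUnion hdisj (fun h => ht.inter (hsm h)), tsum_fintype]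
  have hsum : (∫ θ, tp3 (φ (X 0 θ)) (φ (X 1 θ)) (φ (X 2 θ)) ∂ℙ)
      = ∑ h, ∫ θ, tp3 (φ (X 0 θ)) (φ (X 1 θ)) (φ (X 2 θ))
          ∂((ℙ : Measure Θ).restrict (s h)) := by
    conv_lhs => rw [hdecomp]
    exact integral_finset_sum_measure (fun h _ => hint.restrict)
  rw [hsum]
  refine Finset.sum_congr rfl fun h _ => ?_
  have hrestrict : (ℙ : Measure Θ).restrict (s h) = (ℙ : Measure Θ) (s h) • ℙ[|s h] := by
    unfold ProbabilityTheory.cond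
    rw [smul_smul, ENNReal.mul_inv_cancel (hsne h) (hsfin h), one_smul]
  rw [hrestrict, integral_smul_measure, key h, hπ h]
end
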